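/- Under the hypotheses of the Koenigs-type lemma with a_N = g_N'(γ_N) < 1 and γ_N ∈ (0,1) the least fixed point, the conditional survival probability satisfies P(V_{N,t} > 0 | V_N = 0) = (γ_N − γ_{N,t})/γ_N = d_N·a_N^t + O(a_N^{2t}) as t → ∞ for some constant d_N > 0, where γ_{N,t} is the t-th iterate of g_N evaluated at 0. -/

import Mathlib

open Filter Asymptotics Topology

set_option maxHeartbeats 2000000 in
/-- Subcritical survival asymptotics: with `γ_{N,t} = g^[t](0)` and
`a = g'(γ) ∈ (0,1)` at the least fixed point `γ ∈ (0,1)`,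
`(γ - γ_{N,t})/γ = d a^t + O(a^{2t})` for some `d > 0`. -/
theorem subcritical_survival (g : ℝ → ℝ)
    (hanal : AnalyticOn ℝ g (Metric.ball (0:ℝ) 1))
    (hmono : StrictMonoOn g (Set.Icc 0 1)) (h1 : g 1 = 1) (h0 : 0 < g 0)
    (γ : ℝ) (hγ : γ ∈ Set.Ioo (0:ℝ) 1) (hfix : g γ = γ)
    (hleast : ∀ s ∈ Set.Icc (0:ℝ) 1, g s = s → γ ≤ s)
    (ha0 : 0 < deriv g γ) (ha1 : deriv g γ < 1) :
    ∃ d : ℝ, 0 < d ∧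
      (fun t : ℕ => (γ - g^[t] 0) / γ - d * (deriv g γ) ^ t) =O[atTop]
        (fun t : ℕ => (deriv g γ) ^ (2 * t)) := by
  obtain ⟨hγ0, hγ1⟩ := hγ
  set a : ℝ := deriv g γ with ha_def
  have hane : a ≠ 0 := ne_of_gt ha0
  have hnhd : AnalyticOnNhd ℝ g (Metric.ball (0:ℝ) 1) :=
    (Metric.isOpen_ball.analyticOn_iff_analyticOnNhd).mp hanal
  have hball : ∀ x : ℝ, 0 ≤ x → x ≤ γ → x ∈ Metric.ball (0:ℝ) 1 := by
    intro x hx0 hxγ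
    simp only [Metric.mem_ball, Real.dist_eq, sub_zero, abs_lt]
    constructor <;> linarith
  have hcont : ∀ x : ℝ, 0 ≤ x → x ≤ γ → ContinuousAt g x := fun x hx0 hxγ =>
    (hnhd x (hball x hx0 hxγ)).continuousAt
  -- g s ≥ s on [0, γ]
  have hge : ∀ s, 0 ≤ s → s ≤ γ → s ≤ g s := by
    intro s hs0 hsγ
    by_contra hlt
    push_neg at hlt
    have hs0' : 0 < s := by
      rcases lt_or_eq_of_le hs0 with h | h
      · exact h
      · exfalso; rw [← h] at hlt; linarith
    have hcOn : ContinuousOn (fun y => g y - y) (Set.Icc 0 s) := by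
      apply ContinuousOn.sub _ continuousOn_id
      intro y hy
      exact (hcont y hy.1 (le_trans hy.2 hsγ)).continuousWithinAt
    have hivt := intermediate_value_Icc' hs0 hcOn (a := 0) (b := s)
    have h0mem : (0:ℝ) ∈ Set.Icc (g s - s) (g 0 - 0) := by
      constructor <;> simp <;> linarith
    obtain ⟨c, hc, hgc⟩ := hivt h0mem
    have hgc' : g c = c := by linarith [sub_eq_zero.mp hgc]
    have := hleast c ⟨hc.1, by linarith [hc.2]⟩ hgc'
    have hcγ : c = γ := le_antisymm (by linarith [hc.2]) this
    rw [hcγ] at hc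
    have hsγ' : s = γ := le_antisymm hsγ hc.2
    rw [hsγ', hfix] at hlt
    linarith
  -- iterates stay in [0, γ) and increase
  have hiter : ∀ t : ℕ, (g^[t] 0 ∈ Set.Ico (0:ℝ) γ) ∧ g^[t] 0 ≤ g^[t+1] 0 := by
    intro t
    induction t with
    | zero => exact ⟨⟨le_refl _, hγ0⟩, by simp [hge 0 le_rfl hγ0.le]⟩
    | succ n ih =>
      obtain ⟨⟨hy0, hyγ⟩, _⟩ := ih
      have hstep : g^[n+1] 0 = g (g^[n] 0) := Function.iterate_succ_apply' g n 0
      have hlt : g (g^[n] 0) < γ := by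
        have := hmono ⟨hy0, by linarith⟩ ⟨hγ0.le, hγ1.le⟩ hyγ
        rwa [hfix] at this
      have hge0 : 0 ≤ g (g^[n] 0) := le_trans hy0 (hge _ hy0 hyγ.le)
      refine ⟨⟨by rw [hstep]; exact hge0, by rw [hstep]; exact hlt⟩, ?_⟩
      rw [Function.iterate_succ_apply' g (n+1) 0, hstep]
      exact hge _ hge0 hlt.le
  have hmono_seq : Monotone (fun t => g^[t] 0) :=
    monotone_nat_of_le_succ fun t => (hiter t).2
  have hbddγ : ∀ t, g^[t] 0 ≤ γ := fun t => ((hiter t).1.2).le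
  -- convergence to γ
  have hbdd : BddAbove (Set.range fun t => g^[t] 0) := ⟨γ, by rintro y ⟨t, rfl⟩; exact hbddγ t⟩
  set L : ℝ := ⨆ t, g^[t] 0 with hL_def
  have htendL : Tendsto (fun t => g^[t] 0) atTop (𝓝 L) :=
    tendsto_atTop_ciSup hmono_seq hbdd
  have hLγ : L ≤ γ := ciSup_le hbddγ
  have hL0 : 0 ≤ L := le_trans (hiter 0).1.1 (le_ciSup hbdd 0)
  have hgL : g L = L := by
    have hcL : ContinuousAt g L := hcont L hL0 hLγ
    have h1' : Tendsto (fun t => g (g^[t] 0)) atTop (𝓝 (g L)) := hcL.tendsto.comp htendL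
    have h2' : Tendsto (fun t => g (g^[t] 0)) atTop (𝓝 L) := by
      have := htendL.comp (tendsto_add_atTop_nat 1)
      have heq : ((fun t => g^[t] 0) ∘ fun n => n + 1) = fun t => g (g^[t] 0) := by
        funext t
        simp [Function.comp, Function.iterate_succ_apply' g]
      rwa [heq] at this
    exact tendsto_nhds_unique h1' h2'
  have hLeq : L = γ := le_antisymm hLγ (hleast L ⟨hL0, by linarith⟩ hgL)
  rw [hLeq] at htendL
  clear_value L
  -- quadratic Taylor bound at γ
  obtain ⟨p, hp⟩ : AnalyticAt ℝ g γ := hnhd γ (hball γ hγ0.le le_rfl)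
  have hbig := hp.isBigO_sub_partialSum_pow 2
  have hps : ∀ y : ℝ, p.partialSum 2 y = γ + a * y := by
    intro y
    have hc0 : ((p 0) fun _ => y) = g γ := hp.coeff_zero _
    have hc1 : ((p 1) fun _ => y) = y ^ 1 • p.coeff 1 :=
      FormalMultilinearSeries.apply_eq_pow_smul_coeff
    have hc2 : p.coeff 1 = a := by rw [ha_def, hp.deriv]; rfl
    have hc3 : p.coeff 0 = g γ := hp.coeff_zero 1
    simp [FormalMultilinearSeries.partialSum, Finset.sum_range_succ, hc0, hc1, hc2, hc3, hfix]
    ring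
  obtain ⟨C, hCbd⟩ := isBigO_iff.mp hbig
  rw [Metric.eventually_nhds_iff] at hCbd
  obtain ⟨δ, hδpos, hδ⟩ := hCbd
  set C₁ : ℝ := max C 1 with hC₁_def
  have hC₁pos : 0 < C₁ := lt_of_lt_of_le one_pos (le_max_right _ _)
  have hquad : ∀ y : ℝ, |y| < δ → |g (γ + y) - (γ + a * y)| ≤ C₁ * y ^ 2 := by
    intro y hy
    have := hδ (show dist y 0 < δ by simpa [Real.dist_eq] using hy)
    rw [hps] at this
    have h2 : ‖g (γ + y) - (γ + a * y)‖ ≤ C * ‖(‖y‖ ^ 2)‖ := this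
    have h3 : C * ‖(‖y‖ ^ 2)‖ ≤ C₁ * y ^ 2 := by
      have : ‖(‖y‖ ^ 2)‖ = y ^ 2 := by
        rw [Real.norm_eq_abs, Real.norm_eq_abs, abs_of_nonneg (by positivity), sq_abs]
      rw [this]
      exact mul_le_mul_of_nonneg_right (le_max_left _ _) (by positivity)
    calc |g (γ + y) - (γ + a * y)| ≤ C * ‖(‖y‖ ^ 2)‖ := h2
      _ ≤ C₁ * y ^ 2 := h3
  -- constants
  have h1apos : (0:ℝ) < 1 - a := by linarith
  have h1ane : (1:ℝ) - a ≠ 0 := by linarith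
  set b : ℝ := (1 + a) / 2 with hb_def
  have hab : a < b := by rw [hb_def]; linarith
  have hb1 : b < 1 := by rw [hb_def]; linarith
  have hb0 : 0 < b := by rw [hb_def]; linarith
  set ε : ℝ := min (δ / 2) (a * (1 - a) / (8 * C₁)) with hε_def
  have hεpos : 0 < ε := lt_min (by linarith) (div_pos (mul_pos ha0 h1apos) (by positivity))
  have hεδ : ε < δ := lt_of_le_of_lt (min_le_left _ _) (by linarith)
  have hεa : ε ≤ a * (1 - a) / (8 * C₁) := min_le_right _ _
  set c : ℝ := C₁ * ε / a with hc_def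
  have hcpos : 0 < c := by rw [hc_def]; exact div_pos (mul_pos hC₁pos hεpos) ha0
  have hc_le : c ≤ (1 - a) / 8 := by
    rw [hc_def, div_le_div_iff₀ ha0 (by norm_num : (0:ℝ) < 8)]
    have : C₁ * ε ≤ C₁ * (a * (1 - a) / (8 * C₁)) :=
      mul_le_mul_of_nonneg_left hεa hC₁pos.le
    calc C₁ * ε * 8 ≤ C₁ * (a * (1 - a) / (8 * C₁)) * 8 := by linarith
      _ = (1 - a) * a := by field_simp
  have haCb : a + C₁ * ε ≤ b := by
    have h8 : C₁ * ε ≤ a * (1 - a) / 8 := by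
      have := mul_le_mul_of_nonneg_left hεa hC₁pos.le
      calc C₁ * ε ≤ C₁ * (a * (1 - a) / (8 * C₁)) := this
        _ = a * (1 - a) / 8 := by field_simp
    have : a * (1 - a) / 8 ≤ (1 - a) / 2 := by nlinarith [sq_nonneg (1 - a), ha0, ha1]
    rw [hb_def]; linarith
  clear_value b C₁ ε c
  -- geometric sums
  set S : ℕ → ℝ := fun m => ∑ k ∈ Finset.range m, b ^ k with hS_def
  have hS_succ : ∀ m, S (m + 1) = S m + b ^ m := fun m => Finset.sum_range_succ _ m
  have hS_nonneg : ∀ m, 0 ≤ S m := fun m => Finset.sum_nonneg fun k _ => pow_nonneg hb0.le k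
  have hS_le : ∀ m, S m ≤ 2 / (1 - a) := by
    intro m
    have hgs : S m = (b ^ m - 1) / (b - 1) := by rw [hS_def]; exact geom_sum_eq (ne_of_lt hb1) m
    have hbm0 : 0 ≤ b ^ m := pow_nonneg hb0.le m
    have hbneg : b - 1 < 0 := by linarith
    rw [hgs, div_le_iff_of_neg hbneg]
    have hkey : 2 / (1 - a) * (b - 1) = -1 := by
      rw [hb_def]; field_simp; ring
    rw [hkey]; linarith
  have hcS : ∀ m, c * S m ≤ 1 / 4 := by
    intro m
    have h1' : c * S m ≤ c * (2 / (1 - a)) := mul_le_mul_of_nonneg_left (hS_le m) hcpos.le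
    have h2' : c * (2 / (1 - a)) ≤ (1 - a) / 8 * (2 / (1 - a)) :=
      mul_le_mul_of_nonneg_right hc_le (div_nonneg (by norm_num) h1apos.le)
    have h3' : (1 - a) / 8 * (2 / (1 - a)) = 1 / 4 := by
      field_simp; ring
    linarith
  clear_value S
  -- starting index T
  obtain ⟨T, hT⟩ := (htendL.eventually (eventually_gt_nhds (show γ - ε < γ by linarith))).exists
  set x : ℕ → ℝ := fun m => γ - g^[T + m] 0 with hx_def
  have hx_eq : ∀ m, x m = γ - g^[T + m] 0 := fun m => by rw [hx_def]
  have hx_pos : ∀ m, 0 < x m := fun m => by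
    simp only [hx_def, sub_pos]; exact (hiter (T + m)).1.2
  have hx0ε : x 0 ≤ ε := by simp only [hx_def, Nat.add_zero]; linarith
  have hx_rec : ∀ m, γ - x (m + 1) = g (γ - x m) := by
    intro m
    simp only [hx_def, sub_sub_cancel]
    rw [show T + (m + 1) = (T + m) + 1 by ring, Function.iterate_succ_apply' g (T + m) 0]
  clear_value x
  have hrec : ∀ m, x m < δ → |x (m + 1) - a * x m| ≤ C₁ * x m ^ 2 := by
    intro m hm
    have hy : |(-(x m))| < δ := by rwa [abs_neg, abs_of_pos (hx_pos m)]
    have := hquad (-(x m)) hy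
    rw [show γ + -(x m) = γ - x m by ring, ← hx_rec m] at this
    rw [show γ - x (m + 1) - (γ + a * -(x m)) = -(x (m + 1) - a * x m) by ring, abs_neg,
      neg_sq] at this
    exact this
  -- Claim 1: x m ≤ ε * b^m
  have hxb : ∀ m, x m ≤ ε * b ^ m := by
    intro m
    induction m with
    | zero => simpa using hx0ε
    | succ n ih =>
      have hbn1 : b ^ n ≤ 1 := pow_le_one₀ hb0.le hb1.le
      have hxn0 : 0 < x n := hx_pos n
      have hxε : x n ≤ ε := ih.trans (mul_le_of_le_one_right hεpos.le hbn1)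
      have hxδ : x n < δ := lt_of_le_of_lt hxε hεδ
      have h := abs_le.mp (hrec n hxδ)
      have hq1 : x (n + 1) ≤ a * x n + C₁ * x n ^ 2 := by linarith [h.2]
      have hq2 : C₁ * x n ^ 2 ≤ C₁ * ε * x n := by
        calc C₁ * x n ^ 2 = C₁ * x n * x n := by ring
          _ ≤ C₁ * ε * x n :=
            mul_le_mul_of_nonneg_right (mul_le_mul_of_nonneg_left hxε hC₁pos.le) hxn0.le
      have : x (n + 1) ≤ b * x n := by
        have h3 := mul_le_mul_of_nonneg_right haCb hxn0.le
        linarith [h3, hq1, hq2]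
      calc x (n + 1) ≤ b * x n := this
        _ ≤ b * (ε * b ^ n) := mul_le_mul_of_nonneg_left ih hb0.le
        _ = ε * b ^ (n + 1) := by ring
  have hxε' : ∀ m, x m ≤ ε := fun m =>
    (hxb m).trans (mul_le_of_le_one_right hεpos.le (pow_le_one₀ hb0.le hb1.le))
  have hxδ' : ∀ m, x m < δ := fun m => lt_of_le_of_lt (hxε' m) hεδ
  have hq : ∀ m, |x (m + 1) - a * x m| ≤ C₁ * x m ^ 2 := fun m => hrec m (hxδ' m)
  -- Claim 2: upper bound x m ≤ ε * a^m * exp (c * S m)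
  have hup : ∀ m, x m ≤ ε * a ^ m * Real.exp (c * S m) := by
    intro m
    induction m with
    | zero => simp [hS_def]; linarith [hx0ε]
    | succ n ih =>
      have h := abs_le.mp (hq n)
      have hxn0 : 0 < x n := hx_pos n
      have hbn0 : (0:ℝ) ≤ b ^ n := pow_nonneg hb0.le n
      have hac : a * c = C₁ * ε := by rw [hc_def]; field_simp
      have hCx : C₁ * x n ≤ a * (c * b ^ n) := by
        have h5 : C₁ * x n ≤ C₁ * (ε * b ^ n) := mul_le_mul_of_nonneg_left (hxb n) hC₁pos.le
        have h7 : a * (c * b ^ n) = C₁ * (ε * b ^ n) := by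
          calc a * (c * b ^ n) = a * c * b ^ n := by ring
            _ = C₁ * ε * b ^ n := by rw [hac]
            _ = C₁ * (ε * b ^ n) := by ring
        linarith
      have h8 : C₁ * x n ^ 2 ≤ a * (c * b ^ n) * x n := by
        calc C₁ * x n ^ 2 = C₁ * x n * x n := by ring
          _ ≤ a * (c * b ^ n) * x n := mul_le_mul_of_nonneg_right hCx hxn0.le
      have step1 : x (n + 1) ≤ a * (1 + c * b ^ n) * x n := by linarith [h.2, h8]
      have step2 : (1 : ℝ) + c * b ^ n ≤ Real.exp (c * b ^ n) := by
        linarith [Real.add_one_le_exp (c * b ^ n)]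
      have step3 : x (n + 1) ≤ a * Real.exp (c * b ^ n) * x n := by
        have h6 := mul_le_mul_of_nonneg_right step2 (mul_nonneg ha0.le hxn0.le)
        linarith [h6, step1]
      have step4 : x (n + 1) ≤ a * Real.exp (c * b ^ n) * (ε * a ^ n * Real.exp (c * S n)) := by
        have hpos : 0 ≤ a * Real.exp (c * b ^ n) := mul_nonneg ha0.le (Real.exp_pos _).le
        exact step3.trans (mul_le_mul_of_nonneg_left ih hpos)
      calc x (n + 1) ≤ a * Real.exp (c * b ^ n) * (ε * a ^ n * Real.exp (c * S n)) := step4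
        _ = ε * a ^ (n + 1) * (Real.exp (c * S n) * Real.exp (c * b ^ n)) := by ring
        _ = ε * a ^ (n + 1) * Real.exp (c * S (n + 1)) := by
            rw [← Real.exp_add, hS_succ n, mul_add]
  set M : ℝ := ε * Real.exp (c * (2 / (1 - a))) with hM_def
  have hMpos : 0 < M := mul_pos hεpos (Real.exp_pos _)
  have hM : ∀ m, x m ≤ M * a ^ m := by
    intro m
    have he : Real.exp (c * S m) ≤ Real.exp (c * (2 / (1 - a))) :=
      Real.exp_le_exp.mpr (mul_le_mul_of_nonneg_left (hS_le m) hcpos.le)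
    have := hup m
    have ham : (0:ℝ) < a ^ m := pow_pos ha0 m
    calc x m ≤ ε * a ^ m * Real.exp (c * S m) := this
      _ ≤ ε * a ^ m * Real.exp (c * (2 / (1 - a))) :=
          mul_le_mul_of_nonneg_left he (mul_nonneg hεpos.le (pow_pos ha0 m).le)
      _ = M * a ^ m := by rw [hM_def]; ring
  -- Claim 3: lower bound
  have hlo : ∀ m, x 0 * a ^ m * (1 - c * S m) ≤ x m := by
    intro m
    induction m with
    | zero => simp [hS_def]
    | succ n ih =>
      have h := abs_le.mp (hq n)
      have hxn0 : 0 < x n := hx_pos n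
      have hbn0 : (0:ℝ) ≤ b ^ n := pow_nonneg hb0.le n
      have hac : a * c = C₁ * ε := by rw [hc_def]; field_simp
      have hCx : C₁ * x n ≤ a * (c * b ^ n) := by
        have h5 : C₁ * x n ≤ C₁ * (ε * b ^ n) := mul_le_mul_of_nonneg_left (hxb n) hC₁pos.le
        have h7 : a * (c * b ^ n) = C₁ * (ε * b ^ n) := by
          calc a * (c * b ^ n) = a * c * b ^ n := by ring
            _ = C₁ * ε * b ^ n := by rw [hac]
            _ = C₁ * (ε * b ^ n) := by ring
        linarith
      have h8 : C₁ * x n ^ 2 ≤ a * (c * b ^ n) * x n := by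
        calc C₁ * x n ^ 2 = C₁ * x n * x n := by ring
          _ ≤ a * (c * b ^ n) * x n := mul_le_mul_of_nonneg_right hCx hxn0.le
      have step1 : a * (1 - c * b ^ n) * x n ≤ x (n + 1) := by linarith [h.1, h8]
      have hcb1 : c * b ^ n ≤ 1 / 4 := by
        have hbn1 : b ^ n ≤ 1 := pow_le_one₀ hb0.le hb1.le
        have := mul_le_of_le_one_right hcpos.le hbn1
        linarith
      have hcS1 : c * S n ≤ 1 / 4 := hcS n
      have hx00 : 0 < x 0 := hx_pos 0
      have han : (0:ℝ) < a ^ n := pow_pos ha0 n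
      have step2 : x 0 * a ^ (n + 1) * (1 - c * S (n + 1)) ≤ a * (1 - c * b ^ n) * x n := by
        have hSn1 : S (n + 1) = S n + b ^ n := hS_succ n
        have key : x 0 * a ^ n * (1 - c * S n) * (a * (1 - c * b ^ n)) ≥
            x 0 * a ^ (n + 1) * (1 - c * S (n + 1)) := by
          rw [hSn1]
          have e0 : 0 ≤ (c * S n) * (c * b ^ n) :=
            mul_nonneg (mul_nonneg hcpos.le (hS_nonneg n)) (mul_nonneg hcpos.le hbn0)
          have e1 : (1 - c * S n) * (1 - c * b ^ n) ≥ 1 - c * (S n + b ^ n) := by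
            linarith [e0]
          have hpos2 : (0:ℝ) ≤ x 0 * a ^ (n + 1) := mul_nonneg hx00.le (pow_pos ha0 (n+1)).le
          have : x 0 * a ^ n * (1 - c * S n) * (a * (1 - c * b ^ n)) =
              x 0 * a ^ (n + 1) * ((1 - c * S n) * (1 - c * b ^ n)) := by ring
          rw [this]
          exact mul_le_mul_of_nonneg_left e1 hpos2
        have hfac : 0 ≤ a * (1 - c * b ^ n) := mul_nonneg ha0.le (by linarith)
        linarith [mul_le_mul_of_nonneg_right ih hfac, key]
      linarith
  -- u m = x m / a^m is Cauchy with geometric error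
  set u : ℕ → ℝ := fun m => x m / a ^ m with hu_def
  set K : ℝ := C₁ * M ^ 2 / a with hK_def
  have hKpos : 0 < K := div_pos (mul_pos hC₁pos (pow_pos hMpos 2)) ha0
  clear_value M
  have hdist : ∀ m, dist (u m) (u (m + 1)) ≤ K * a ^ m := by
    intro m
    have ham : (0:ℝ) < a ^ m := pow_pos ha0 m
    have ham1 : (0:ℝ) < a ^ (m + 1) := pow_pos ha0 (m+1)
    have hud : u m - u (m + 1) = -(x (m + 1) - a * x m) / a ^ (m + 1) := by
      rw [hu_def]
      field_simp
      ring
    rw [Real.dist_eq, hud, abs_div, abs_neg, abs_of_pos ham1]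
    rw [div_le_iff₀ ham1]
    have hb1' : |x (m + 1) - a * x m| ≤ C₁ * x m ^ 2 := hq m
    have hb2 : C₁ * x m ^ 2 ≤ C₁ * (M * a ^ m) ^ 2 := by
      have h5 := mul_self_le_mul_self (hx_pos m).le (hM m)
      have h6 := mul_le_mul_of_nonneg_left h5 hC₁pos.le
      linarith [h6]
    have hb3 : C₁ * (M * a ^ m) ^ 2 = K * a ^ m * a ^ (m + 1) * a ^ m / a ^ m := by
      rw [hK_def]
      field_simp
      ring
    have hb4 : K * a ^ m * a ^ (m + 1) * a ^ m / a ^ m = K * a ^ m * a ^ (m + 1) := by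
      field_simp
    linarith
  have hcauchy : CauchySeq u := cauchySeq_of_le_geometric a K ha1 hdist
  obtain ⟨d', hd'⟩ := cauchySeq_tendsto_of_complete hcauchy
  have hdL : ∀ m, dist (u m) d' ≤ K * a ^ m / (1 - a) :=
    fun m => dist_le_of_le_geometric_of_tendsto a K ha1 hdist hd' m
  -- d' is positive
  have hulo : ∀ m, 3 / 4 * x 0 ≤ u m := by
    intro m
    have ham : (0:ℝ) < a ^ m := pow_pos ha0 m
    rw [hu_def, le_div_iff₀ ham]
    have h1' := hlo m
    have h2' : (3:ℝ) / 4 ≤ 1 - c * S m := by linarith [hcS m]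
    have hx00 : 0 < x 0 := hx_pos 0
    have h3' := mul_le_mul_of_nonneg_left h2' (mul_nonneg hx00.le (pow_pos ha0 m).le)
    linarith [h3', h1']
  have hd'pos : 0 < d' := by
    have : 3 / 4 * x 0 ≤ d' := ge_of_tendsto' hd' hulo
    have hx00 : 0 < x 0 := hx_pos 0
    linarith
  -- assemble
  have haT : (0:ℝ) < a ^ T := pow_pos ha0 T
  refine ⟨d' / (γ * a ^ T), div_pos hd'pos (mul_pos hγ0 haT), ?_⟩
  rw [isBigO_iff]
  refine ⟨K / ((1 - a) * γ * a ^ (2 * T)), ?_⟩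
  filter_upwards [eventually_ge_atTop T] with t ht
  set m : ℕ := t - T with hm_def
  have htm : T + m = t := by omega
  have hxm : γ - g^[t] 0 = x m := by rw [hx_eq m, htm]
  have hat : a ^ t = a ^ T * a ^ m := by rw [← htm, pow_add]
  have ha2t : a ^ (2 * t) = a ^ (2 * T) * (a ^ m) ^ 2 := by
    rw [← htm]
    rw [show 2 * (T + m) = 2 * T + 2 * m by ring, pow_add, two_mul m, pow_add]
    ring
  have ham : (0:ℝ) < a ^ m := pow_pos ha0 m
  have ha2T : (0:ℝ) < a ^ (2 * T) := pow_pos ha0 (2*T)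
  have hxum : x m = u m * a ^ m := by
    rw [hu_def]; field_simp
  have hlhs : (γ - g^[t] 0) / γ - d' / (γ * a ^ T) * a ^ t = a ^ m * (u m - d') / γ := by
    rw [hxm, hat, hxum]
    field_simp
  rw [hlhs]
  have hnorm : ‖a ^ m * (u m - d') / γ‖ = a ^ m * |u m - d'| / γ := by
    rw [Real.norm_eq_abs, abs_div, abs_mul, abs_of_pos ham, abs_of_pos hγ0]
  rw [hnorm]
  have hdm : |u m - d'| ≤ K * a ^ m / (1 - a) := by
    have := hdL m
    rwa [Real.dist_eq] at this
  have hrhs : K / ((1 - a) * γ * a ^ (2 * T)) * ‖a ^ (2 * t)‖ =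
      K * (a ^ m) ^ 2 / ((1 - a) * γ) := by
    rw [Real.norm_eq_abs, ha2t, abs_of_pos (mul_pos ha2T (pow_pos ham 2))]
    field_simp
  rw [hrhs]
  rw [div_le_div_iff₀ hγ0 (mul_pos h1apos hγ0)]
  have h9 := mul_le_mul_of_nonneg_right ((le_div_iff₀ h1apos).mp hdm)
    (mul_nonneg ham.le hγ0.le)
  linarith [h9]
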